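/- Let H be a valuation monoid with quotient group K and let T be any overmonoid of H (i.e., H ⊆ T ⊆ K). Then there is a submonoid S of H such that T = S^{-1}H = {s^{-1}·x : s ∈ S, x ∈ H}. -/
import Mathlib

theorem stmt7 {K : Type*} [CommGroup K] (H T : Submonoid K)
    (hval : ∀ x : K, x ∈ H ∨ x⁻¹ ∈ H) (hHT : H ≤ T) :
    ∃ S : Submonoid K, S ≤ H ∧ ∀ t : K, t ∈ T ↔ ∃ s ∈ S, ∃ x ∈ H, t = s⁻¹ * x := by
  refine ⟨{ carrier := {s | s ∈ H ∧ s⁻¹ ∈ T},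
            one_mem' := ⟨H.one_mem, by simpa using T.one_mem⟩,
            mul_mem' := fun ha hb => ⟨H.mul_mem ha.1 hb.1,
              by rw [mul_inv]; exact T.mul_mem ha.2 hb.2⟩ },
        fun s hs => hs.1, fun t => ?_⟩
  constructor
  · intro ht
    rcases hval t with h | h
    · exact ⟨1, ⟨H.one_mem, by simpa using T.one_mem⟩, t, h, by simp⟩
    · exact ⟨t⁻¹, ⟨h, by simpa using ht⟩, 1, H.one_mem, by simp⟩
  · rintro ⟨s, hs, x, hx, rfl⟩
    exact T.mul_mem hs.2 (hHT hx)
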